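/- arXiv:1705.09282 — 2 statements merged into one kernel-verified Lean document; each statement's English description precedes it below -/
import Mathlib

section
/- Let V, Q be finite-dimensional inner product spaces, A : V → V a linear map that is coercive (⟨Av, v⟩ ≥ α‖v‖² for some α > 0 and all v), and B : V → Q linear. Then the saddle-point operator K(v, q) = (Av − B*q, Bv) on V × Q is injective on the subspace {(v,q) : q ∈ range(B)}; in particular, if B is surjective, K is invertible. -/
open scoped RealInnerProductSpace

/-- The saddle-point operator `K(v,q) = (Av − B*q, Bv)` with `A` coercive is injective on
the subspace `{(v,q) : q ∈ range B}`; if moreover `B` is surjective, `K` is bijective. -/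
theorem stmt10 {V Q : Type*}
    [NormedAddCommGroup V] [InnerProductSpace ℝ V] [FiniteDimensional ℝ V]
    [NormedAddCommGroup Q] [InnerProductSpace ℝ Q] [FiniteDimensional ℝ Q]
    (A : V →ₗ[ℝ] V) (α : ℝ) (hα : 0 < α)
    (hcoer : ∀ v : V, α * ‖v‖ ^ 2 ≤ ⟪A v, v⟫)
    (B : V →ₗ[ℝ] Q)
    (K : V × Q → V × Q)
    (hK : ∀ vq : V × Q, K vq = (A vq.1 - (LinearMap.adjoint B) vq.2, B vq.1)) :
    (∀ v₁ q₁ v₂ q₂, q₁ ∈ LinearMap.range B → q₂ ∈ LinearMap.range B →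
        K (v₁, q₁) = K (v₂, q₂) → (v₁, q₁) = (v₂, q₂)) ∧
      (Function.Surjective B → Function.Bijective K) := by
  have hinj : ∀ v₁ q₁ v₂ q₂, q₁ ∈ LinearMap.range B → q₂ ∈ LinearMap.range B →
      K (v₁, q₁) = K (v₂, q₂) → (v₁, q₁) = (v₂, q₂) := by
    intro v₁ q₁ v₂ q₂ hq₁ hq₂ heq
    obtain ⟨w₁, hw₁⟩ := hq₁
    obtain ⟨w₂, hw₂⟩ := hq₂
    rw [hK, hK] at heq
    have h1 : A v₁ - LinearMap.adjoint B q₁ = A v₂ - LinearMap.adjoint B q₂ :=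
      congrArg Prod.fst heq
    have h2 : B v₁ = B v₂ := congrArg Prod.snd heq
    have hAv : A (v₁ - v₂) = LinearMap.adjoint B (q₁ - q₂) := by
      simp only [map_sub]
      exact sub_eq_sub_iff_sub_eq_sub.mp h1
    have hBv : B (v₁ - v₂) = 0 := by simp [map_sub, h2]
    have hv0 : v₁ - v₂ = 0 := by
      have hh : ⟪A (v₁ - v₂), v₁ - v₂⟫ = (0 : ℝ) := by
        rw [hAv, LinearMap.adjoint_inner_left, hBv, inner_zero_right]
      have := hcoer (v₁ - v₂)
      rw [hh] at this
      have hsq : ‖v₁ - v₂‖ ^ 2 ≤ 0 :=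
        le_of_not_gt fun h => absurd this (not_le.mpr (mul_pos hα h))
      have hn : ‖v₁ - v₂‖ = 0 := by
        nlinarith [norm_nonneg (v₁ - v₂), sq_nonneg ‖v₁ - v₂‖]
      exact norm_eq_zero.mp hn
    have hadj0 : LinearMap.adjoint B (q₁ - q₂) = 0 := by
      rw [← hAv, hv0, map_zero]
    have hq0 : q₁ - q₂ = 0 := by
      have : ⟪q₁ - q₂, q₁ - q₂⟫ = (0 : ℝ) := by
        have hsub : B (w₁ - w₂) = q₁ - q₂ := by rw [map_sub, hw₁, hw₂]
        nth_rewrite 1 [← hsub]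
        rw [← LinearMap.adjoint_inner_right, hadj0, inner_zero_right]
      exact inner_self_eq_zero.mp this
    have := sub_eq_zero.mp hv0
    have := sub_eq_zero.mp hq0
    simp_all
  refine ⟨hinj, fun hBsurj => ?_⟩
  have hrange : ∀ q : Q, q ∈ LinearMap.range B := by
    intro q; obtain ⟨v, hv⟩ := hBsurj q; exact ⟨v, hv⟩
  have hKinj : Function.Injective K := by
    intro x y h
    have := hinj x.1 x.2 y.1 y.2 (hrange x.2) (hrange y.2) (by simpa using h)
    simpa using this
  -- K coincides with a linear map
  set L : V × Q →ₗ[ℝ] V × Q :=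
    LinearMap.prod (A.comp (LinearMap.fst ℝ V Q) - (LinearMap.adjoint B).comp (LinearMap.snd ℝ V Q))
      (B.comp (LinearMap.fst ℝ V Q)) with hL
  have hKL : K = ⇑L := by
    funext vq
    rw [hK]
    rfl
  rw [hKL] at hKinj ⊢
  exact ⟨hKinj, LinearMap.injective_iff_surjective.mp hKinj⟩
end

section
/- Let V_i ⊆ V and Q_i ⊆ Q be finite-dimensional subspaces with div(V_i) = Q_i, where div : V → Q is linear. Suppose (δu, δp) ∈ V_i × Q_i solves the local mixed problem a(v, δu) − b(v, δp) + b(δu, q) = ℓ(v) − a(v, u) + b(v, p) − b(u, q) for all (v, q) ∈ V_i × Q_i, where b(v, q) = ⟨div v, q⟩ and the current iterate u satisfies div u = 0. Then div δu = 0, and hence div(u + δu) = 0. -/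
open scoped RealInnerProductSpace

/-- Divergence preservation of the Schwarz smoother on a compatible subdomain, in
variational form.  If `div(V_i) = Q_i`, the current iterate `u` is divergence-free, and
`(δu, δp) ∈ V_i × Q_i` solves the local mixed problem, then `div δu = 0` and hence
`div (u + δu) = 0`. -/
theorem stmt14 {V Q : Type*} [NormedAddCommGroup V] [InnerProductSpace ℝ V]
    [NormedAddCommGroup Q] [InnerProductSpace ℝ Q]
    (dvg : V →ₗ[ℝ] Q)
    (a : V →ₗ[ℝ] V →ₗ[ℝ] ℝ) (ℓ : V →ₗ[ℝ] ℝ)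
    (b : V → Q → ℝ) (hb : ∀ v q, b v q = ⟪dvg v, q⟫)
    (Vi : Submodule ℝ V) (Qi : Submodule ℝ Q)
    (hVQ : Vi.map dvg = Qi)
    (hVfin : FiniteDimensional ℝ Vi) (hQfin : FiniteDimensional ℝ Qi)
    (u : V) (p : Q) (hu : dvg u = 0)
    (δu : V) (δp : Q) (hδu : δu ∈ Vi) (hδp : δp ∈ Qi)
    (hlocal : ∀ v ∈ Vi, ∀ q ∈ Qi,
      a v δu - b v δp + b δu q = ℓ v - a v u + b v p - b u q) :
    dvg δu = 0 ∧ dvg (u + δu) = 0 := by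
  have hq : dvg δu ∈ Qi := hVQ ▸ ⟨δu, hδu, rfl⟩
  have h := hlocal 0 (zero_mem _) (dvg δu) hq
  simp only [hb, map_zero, inner_zero_left, hu, inner_zero_right, LinearMap.zero_apply] at h
  have : dvg δu = 0 := by
    have h0 : ⟪dvg δu, dvg δu⟫ = 0 := by linarith [h]
    simpa using inner_self_eq_zero.mp h0
  exact ⟨this, by simp [map_add, hu, this]⟩
end
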